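/- If there exists a Steiner system S(t,w',n) and a generalized Steiner system GS(t,w,w',g), then there exists a generalized Steiner system GS(t,w,n,g). -/
import Mathlib


/-- `B` is a Steiner system `S(t,k,n)` on `Fin n`: all blocks have size `k`
and every `t`-subset lies in exactly one block. -/
def isSteiner (t k n : ℕ) (B : Finset (Finset (Fin n))) : Prop :=
  (∀ b ∈ B, b.card = k) ∧
  ∀ T : Finset (Fin n), T.card = t → ∃! b, b ∈ B ∧ T ⊆ b

/-- `C` is a generalized Steiner system `GS(t,w,n,g)`, in codeword form:
a set of weight-`w` words of length `n` over `Z_{g+1}` with minimum Hamming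
distance `2(w-t)+1` such that every assignment of nonzero values to `t`
distinct coordinates is extended by exactly one codeword. -/
def isGS (g t w n : ℕ) (C : Finset (Fin n → ZMod (g + 1))) : Prop :=
  (∀ x ∈ C, hammingNorm x = w) ∧
  (∀ x ∈ C, ∀ y ∈ C, x ≠ y → 2 * (w - t) + 1 ≤ hammingDist x y) ∧
  ∀ S : Finset (Fin n), S.card = t → ∀ f : Fin n → ZMod (g + 1),
    (∀ i ∈ S, f i ≠ 0) → ∃! x, x ∈ C ∧ ∀ i ∈ S, x i = f i

namespace Stmt10Aux

variable {n w' g : ℕ}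

/-- The order embedding of `Fin w'` onto a block `b` of size `w'`. -/
def eb (b : Finset (Fin n)) (hb : b.card = w') (j : Fin w') : Fin n :=
  (b.orderIsoOfFin hb j : Fin n)

lemma eb_mem (b : Finset (Fin n)) (hb : b.card = w') (j : Fin w') : eb b hb j ∈ b :=
  (b.orderIsoOfFin hb j).2

lemma eb_inj (b : Finset (Fin n)) (hb : b.card = w') : Function.Injective (eb b hb) := by
  intro i j h
  exact (b.orderIsoOfFin hb).injective (Subtype.ext h)

/-- Embed a codeword on `Fin w'` into `Fin n` along the block `b`, padding with zeros. -/
def emb (b : Finset (Fin n)) (hb : b.card = w') (x : Fin w' → ZMod (g + 1)) :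
    Fin n → ZMod (g + 1) :=
  fun i => if h : i ∈ b then x ((b.orderIsoOfFin hb).symm ⟨i, h⟩) else 0

lemma emb_eb (b : Finset (Fin n)) (hb : b.card = w') (x : Fin w' → ZMod (g + 1)) (j : Fin w') :
    emb b hb x (eb b hb j) = x j := by
  have h : eb b hb j ∈ b := eb_mem b hb j
  simp only [emb, dif_pos h]
  congr 1
  have : (⟨eb b hb j, h⟩ : {a // a ∈ b}) = b.orderIsoOfFin hb j := Subtype.ext rfl
  rw [this, OrderIso.symm_apply_apply]

lemma emb_not_mem (b : Finset (Fin n)) (hb : b.card = w') (x : Fin w' → ZMod (g + 1))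
    {i : Fin n} (h : i ∉ b) : emb b hb x i = 0 := dif_neg h

lemma mem_of_emb_ne_zero (b : Finset (Fin n)) (hb : b.card = w') (x : Fin w' → ZMod (g + 1))
    {i : Fin n} (h : emb b hb x i ≠ 0) : i ∈ b := by
  by_contra hc; exact h (emb_not_mem b hb x hc)

lemma exists_eb {b : Finset (Fin n)} (hb : b.card = w') {i : Fin n} (h : i ∈ b) :
    ∃ j, eb b hb j = i :=
  ⟨(b.orderIsoOfFin hb).symm ⟨i, h⟩, by simp [eb]⟩

lemma emb_dist (b : Finset (Fin n)) (hb : b.card = w') (x y : Fin w' → ZMod (g + 1)) :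
    hammingDist (emb b hb x) (emb b hb y) = hammingDist x y := by
  unfold hammingDist
  rw [show (Finset.univ.filter fun i => emb b hb x i ≠ emb b hb y i)
      = (Finset.univ.filter fun j => x j ≠ y j).image (eb b hb) from ?_,
    Finset.card_image_of_injective _ (eb_inj b hb)]
  ext i
  simp only [Finset.mem_filter, Finset.mem_univ, true_and, Finset.mem_image]
  constructor
  · intro h
    by_cases hib : i ∈ b
    · obtain ⟨j, hj⟩ := exists_eb hb hib
      refine ⟨j, ?_, hj⟩
      intro hxy
      apply h
      rw [← hj, emb_eb, emb_eb, hxy]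
    · exact absurd (by rw [emb_not_mem b hb x hib, emb_not_mem b hb y hib]) h
  · rintro ⟨j, hj, rfl⟩
    rw [emb_eb, emb_eb]; exact hj

lemma emb_norm (b : Finset (Fin n)) (hb : b.card = w') (x : Fin w' → ZMod (g + 1)) :
    hammingNorm (emb b hb x) = hammingNorm x := by
  have h0 : emb b hb (0 : Fin w' → ZMod (g + 1)) = 0 := by
    funext i; simp [emb]
  rw [← hammingDist_zero_right, ← hammingDist_zero_right (x := x), ← h0, emb_dist]

end Stmt10Aux

/-- If there exists a Steiner system `S(t,w',n)` and a generalized Steiner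
system `GS(t,w,w',g)`, then there exists a `GS(t,w,n,g)`. -/
theorem stmt10 (g t w w' n : ℕ)
    (hS : ∃ B : Finset (Finset (Fin n)), isSteiner t w' n B)
    (hG : ∃ C : Finset (Fin w' → ZMod (g + 1)), isGS g t w w' C) :
    ∃ C : Finset (Fin n → ZMod (g + 1)), isGS g t w n C := by
  classical
  obtain ⟨B, hB1, hB2⟩ := hS
  obtain ⟨C, hC1, hC2, hC3⟩ := hG
  set C' : Finset (Fin n → ZMod (g + 1)) :=
    B.attach.biUnion (fun b => C.image (Stmt10Aux.emb b.1 (hB1 b.1 b.2))) with hC'def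
  have memC' : ∀ u : Fin n → ZMod (g + 1), u ∈ C' ↔
      ∃ b : Finset (Fin n), ∃ hbB : b ∈ B, ∃ x ∈ C,
        u = Stmt10Aux.emb b (hB1 b hbB) x := by
    intro u
    simp only [hC'def, Finset.mem_biUnion, Finset.mem_attach, true_and, Finset.mem_image,
      Subtype.exists]
    constructor
    · rintro ⟨b, hbB, x, hxC, rfl⟩; exact ⟨b, hbB, x, hxC, rfl⟩
    · rintro ⟨b, hbB, x, hxC, rfl⟩; exact ⟨b, hbB, x, hxC, rfl⟩
  refine ⟨C', ?_, ?_, ?_⟩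
  · -- weights
    intro u hu
    obtain ⟨b, hbB, x, hxC, rfl⟩ := (memC' u).1 hu
    rw [Stmt10Aux.emb_norm]
    exact hC1 x hxC
  · -- minimum distance
    intro u hu v hv huv
    obtain ⟨b, hbB, x, hxC, rfl⟩ := (memC' u).1 hu
    obtain ⟨b', hb'B, y, hyC, rfl⟩ := (memC' v).1 hv
    by_cases hbb : b = b'
    · subst hbb
      have hxy : x ≠ y := by
        rintro rfl; exact huv rfl
      rw [Stmt10Aux.emb_dist]
      exact hC2 x hxC y hyC hxy
    · by_cases hwt : w ≤ t
      · have h1 : 2 * (w - t) + 1 = 1 := by omega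
        rw [h1]
        refine Nat.one_le_iff_ne_zero.2 (fun h => huv ?_)
        exact hammingDist_eq_zero.1 h
      · -- two distinct blocks meet in fewer than t points
        have hcap : (b ∩ b').card < t := by
          by_contra hcon
          push_neg at hcon
          obtain ⟨T, hTsub, hTcard⟩ := Finset.exists_subset_card_eq hcon
          obtain ⟨c, -, hcu⟩ := hB2 T hTcard
          exact hbb ((hcu b ⟨hbB, hTsub.trans Finset.inter_subset_left⟩).trans
            (hcu b' ⟨hb'B, hTsub.trans Finset.inter_subset_right⟩).symm)
        set u := Stmt10Aux.emb b (hB1 b hbB) x with hu_def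
        set v := Stmt10Aux.emb b' (hB1 b' hb'B) y with hv_def
        set su : Finset (Fin n) := Finset.univ.filter (fun i => u i ≠ 0) with hsu_def
        set sv : Finset (Fin n) := Finset.univ.filter (fun i => v i ≠ 0) with hsv_def
        have hsu_card : su.card = w := by
          have := hC1 x hxC
          rw [← Stmt10Aux.emb_norm b (hB1 b hbB) x] at this
          exact this
        have hsv_card : sv.card = w := by
          have := hC1 y hyC
          rw [← Stmt10Aux.emb_norm b' (hB1 b' hb'B) y] at this
          exact this
        have hsub_u : su ⊆ b := by
          intro i hi
          exact Stmt10Aux.mem_of_emb_ne_zero b (hB1 b hbB) x (Finset.mem_filter.1 hi).2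
        have hsub_v : sv ⊆ b' := by
          intro i hi
          exact Stmt10Aux.mem_of_emb_ne_zero b' (hB1 b' hb'B) y (Finset.mem_filter.1 hi).2
        have hinter : su ∩ sv ⊆ b ∩ b' := by
          intro i hi
          rw [Finset.mem_inter] at hi ⊢
          exact ⟨hsub_u hi.1, hsub_v hi.2⟩
        have hcapsv : (su ∩ sv).card < t := lt_of_le_of_lt (Finset.card_le_card hinter) hcap
        have hDu : (su \ sv).card + (su ∩ sv).card = w := by
          rw [Finset.card_sdiff_add_card_inter, hsu_card]
        have hDv : (sv \ su).card + (su ∩ sv).card = w := by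
          rw [Finset.inter_comm, Finset.card_sdiff_add_card_inter, hsv_card]
        have hunion : (su \ sv) ∪ (sv \ su) ⊆ Finset.univ.filter (fun i => u i ≠ v i) := by
          intro i hi
          rw [Finset.mem_union] at hi
          rw [Finset.mem_filter]
          refine ⟨Finset.mem_univ i, ?_⟩
          rcases hi with hi | hi
          · rw [Finset.mem_sdiff, Finset.mem_filter, Finset.mem_filter] at hi
            have h1 : u i ≠ 0 := hi.1.2
            have h2 : v i = 0 := by
              by_contra hc
              exact hi.2 ⟨Finset.mem_univ i, hc⟩
            rw [h2]; exact h1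
          · rw [Finset.mem_sdiff, Finset.mem_filter, Finset.mem_filter] at hi
            have h1 : v i ≠ 0 := hi.1.2
            have h2 : u i = 0 := by
              by_contra hc
              exact hi.2 ⟨Finset.mem_univ i, hc⟩
            rw [h2]; exact fun h => h1 h.symm
        have hdisj : Disjoint (su \ sv) (sv \ su) := by
          exact disjoint_sdiff_sdiff
        have hle : (su \ sv).card + (sv \ su).card ≤ hammingDist u v := by
          rw [← Finset.card_union_of_disjoint hdisj]
          exact Finset.card_le_card hunion
        omega
  · -- the extension property
    intro S hScard f hfS
    obtain ⟨b, ⟨hbB, hSb⟩, hbu⟩ := hB2 S hScard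
    have hb : b.card = w' := hB1 b hbB
    set S' : Finset (Fin w') := Finset.univ.filter (fun j => Stmt10Aux.eb b hb j ∈ S)
      with hS'def
    have himg : S'.image (Stmt10Aux.eb b hb) = S := by
      ext i
      simp only [hS'def, Finset.mem_image, Finset.mem_filter, Finset.mem_univ, true_and]
      constructor
      · rintro ⟨j, hj, rfl⟩; exact hj
      · intro hi
        obtain ⟨j, rfl⟩ := Stmt10Aux.exists_eb hb (hSb hi)
        exact ⟨j, hi, rfl⟩
    have hS'card : S'.card = t := by
      rw [← hScard, ← himg, Finset.card_image_of_injective _ (Stmt10Aux.eb_inj b hb)]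
    have hf' : ∀ j ∈ S', f (Stmt10Aux.eb b hb j) ≠ 0 := by
      intro j hj
      exact hfS _ (Finset.mem_filter.1 hj).2
    obtain ⟨x, ⟨hxC, hxf⟩, hxu⟩ := hC3 S' hS'card (fun j => f (Stmt10Aux.eb b hb j)) hf'
    refine ⟨Stmt10Aux.emb b hb x, ⟨(memC' _).2 ⟨b, hbB, x, hxC, rfl⟩, ?_⟩, ?_⟩
    · intro i hi
      obtain ⟨j, rfl⟩ := Stmt10Aux.exists_eb hb (hSb hi)
      rw [Stmt10Aux.emb_eb]
      exact hxf j (Finset.mem_filter.2 ⟨Finset.mem_univ j, hi⟩)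
    · rintro v ⟨hvC', hvf⟩
      obtain ⟨b'', hb''B, z, hzC, rfl⟩ := (memC' v).1 hvC'
      have hSb'' : S ⊆ b'' := by
        intro i hi
        refine Stmt10Aux.mem_of_emb_ne_zero b'' (hB1 b'' hb''B) z ?_
        rw [hvf i hi]
        exact hfS i hi
      have hbeq : b'' = b := hbu b'' ⟨hb''B, hSb''⟩
      subst hbeq
      have hz : ∀ j ∈ S', z j = f (Stmt10Aux.eb b'' hb j) := by
        intro j hj
        have hjS : Stmt10Aux.eb b'' hb j ∈ S := (Finset.mem_filter.1 hj).2
        have := hvf _ hjS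
        rwa [Stmt10Aux.emb_eb] at this
      rw [hxu z ⟨hzC, hz⟩]
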